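/- If a clock-free graph G admits a star cutset, then G admits a clique cutset. -/

import Mathlib

open SimpleGraph

variable {V : Type*}

/-- A hole (induced cycle on at least 4 vertices) given as an embedding of the cycle `ZMod n`. -/
def IsHoleEmb (G : SimpleGraph V) (n : ℕ) (f : ZMod n → V) : Prop :=
  4 ≤ n ∧ Function.Injective f ∧
    ∀ i j, G.Adj (f i) (f j) ↔ (i = j + 1 ∨ j = i + 1)

/-- `G` contains a clock: a hole `C` together with a vertex not in `C` having two
non-adjacent neighbours in `C`. -/
def ContainsClock (G : SimpleGraph V) : Prop :=
  ∃ (n : ℕ) (f : ZMod n → V) (v : V),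
    IsHoleEmb G n f ∧ (∀ i, v ≠ f i) ∧
      ∃ i j, G.Adj v (f i) ∧ G.Adj v (f j) ∧ f i ≠ f j ∧ ¬ G.Adj (f i) (f j)

def ClockFree (G : SimpleGraph V) : Prop := ¬ ContainsClock G

/-- `G` has no induced diamond (`K₄` minus an edge). -/
def DiamondFree (G : SimpleGraph V) : Prop :=
  ¬ ∃ a b c d : V, a ≠ b ∧ a ≠ c ∧ a ≠ d ∧ b ≠ c ∧ b ≠ d ∧ c ≠ d ∧
    G.Adj a b ∧ G.Adj a c ∧ G.Adj a d ∧ G.Adj b c ∧ G.Adj b d ∧ ¬ G.Adj c d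

/-- `X` is a cutset of `G`: removing `X` leaves a non-empty disconnected graph. -/
def IsCutset (G : SimpleGraph V) (X : Set V) : Prop :=
  (Xᶜ : Set V).Nonempty ∧ ¬ (G.induce (Xᶜ : Set V)).Connected

def HasStarCutset (G : SimpleGraph V) : Prop :=
  ∃ X : Set V, IsCutset G X ∧ ∃ x ∈ X, ∀ y ∈ X, y = x ∨ G.Adj x y

def HasCliqueCutset (G : SimpleGraph V) : Prop :=
  ∃ X : Set V, IsCutset G X ∧ G.IsClique X

/-- `X` separates `Y` from `Z`: every path with one end in `Y` and the other in `Z`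
contains a vertex of `X`. -/
def Separates (G : SimpleGraph V) (X Y Z : Set V) : Prop :=
  ∀ y ∈ Y, ∀ z ∈ Z, ∀ p : G.Walk y z, p.IsPath → ∃ x ∈ X, x ∈ p.support

def IsClawCenter (G : SimpleGraph V) (v : V) : Prop :=
  ∃ x y z, G.Adj v x ∧ G.Adj v y ∧ G.Adj v z ∧ x ≠ y ∧ x ≠ z ∧ y ≠ z ∧
    ¬ G.Adj x y ∧ ¬ G.Adj x z ∧ ¬ G.Adj y z

/-- An induced path on `n+1` vertices given as a function from `Fin (n+1)`. -/
def IsPathEmb (G : SimpleGraph V) (n : ℕ) (f : Fin (n+1) → V) : Prop :=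
  Function.Injective f ∧
    ∀ i j, G.Adj (f i) (f j) ↔ ((i : ℕ) + 1 = (j : ℕ) ∨ (j : ℕ) + 1 = (i : ℕ))

/-- Cross conditions between two paths of a pyramid sharing only the apex (index 0):
off-apex parts are disjoint and the only possible edge joins the two far ends. -/
def PyrNoCross (G : SimpleGraph V) {n m : ℕ} (f : Fin (n+1) → V) (g : Fin (m+1) → V) : Prop :=
  ∀ i j, i ≠ 0 → j ≠ 0 →
    f i ≠ g j ∧ (G.Adj (f i) (g j) → i = Fin.last n ∧ j = Fin.last m)

/-- Cross conditions between two paths of a theta: the interiors are disjoint and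
anticomplete. -/
def ThetaNoCross (G : SimpleGraph V) {n m : ℕ} (f : Fin (n+1) → V) (g : Fin (m+1) → V) : Prop :=
  ∀ i j, i ≠ 0 → i ≠ Fin.last n → j ≠ 0 → j ≠ Fin.last m →
    f i ≠ g j ∧ ¬ G.Adj (f i) (g j)

/-- Cross conditions between two paths of a prism: they are disjoint and the only
edges join the two first ends or the two last ends. -/
def PrismNoCross (G : SimpleGraph V) {n m : ℕ} (f : Fin (n+1) → V) (g : Fin (m+1) → V) : Prop :=
  ∀ i j, f i ≠ g j ∧
    (G.Adj (f i) (g j) → (i = 0 ∧ j = 0) ∨ (i = Fin.last n ∧ j = Fin.last m))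

/-- A pyramid with apex `a`, given by three induced paths from `a` to a triangle. -/
def PyramidSpec (G : SimpleGraph V) (a : V) (n₁ n₂ n₃ : ℕ)
    (f₁ : Fin (n₁+1) → V) (f₂ : Fin (n₂+1) → V) (f₃ : Fin (n₃+1) → V) : Prop :=
  IsPathEmb G n₁ f₁ ∧ IsPathEmb G n₂ f₂ ∧ IsPathEmb G n₃ f₃ ∧
  f₁ 0 = a ∧ f₂ 0 = a ∧ f₃ 0 = a ∧
  1 ≤ n₁ ∧ 1 ≤ n₂ ∧ 1 ≤ n₃ ∧
  G.Adj (f₁ (Fin.last n₁)) (f₂ (Fin.last n₂)) ∧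
  G.Adj (f₂ (Fin.last n₂)) (f₃ (Fin.last n₃)) ∧
  G.Adj (f₁ (Fin.last n₁)) (f₃ (Fin.last n₃)) ∧
  ¬(n₁ = 1 ∧ n₂ = 1) ∧ ¬(n₁ = 1 ∧ n₃ = 1) ∧ ¬(n₂ = 1 ∧ n₃ = 1) ∧
  PyrNoCross G f₁ f₂ ∧ PyrNoCross G f₁ f₃ ∧ PyrNoCross G f₂ f₃

def IsPyramidWithApex (G : SimpleGraph V) (Q : Set V) (a : V) : Prop :=
  ∃ (n₁ n₂ n₃ : ℕ) (f₁ : Fin (n₁+1) → V) (f₂ : Fin (n₂+1) → V) (f₃ : Fin (n₃+1) → V),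
    PyramidSpec G a n₁ n₂ n₃ f₁ f₂ f₃ ∧
    Q = Set.range f₁ ∪ Set.range f₂ ∪ Set.range f₃

/-- A short pyramid: a pyramid one of whose paths has length exactly one. -/
def IsShortPyramidWithApex (G : SimpleGraph V) (Q : Set V) (a : V) : Prop :=
  ∃ (n₁ n₂ n₃ : ℕ) (f₁ : Fin (n₁+1) → V) (f₂ : Fin (n₂+1) → V) (f₃ : Fin (n₃+1) → V),
    PyramidSpec G a n₁ n₂ n₃ f₁ f₂ f₃ ∧ (n₁ = 1 ∨ n₂ = 1 ∨ n₃ = 1) ∧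
    Q = Set.range f₁ ∪ Set.range f₂ ∪ Set.range f₃

/-- A theta with ends `a, b`, given by three induced paths from `a` to `b` with
pairwise disjoint, pairwise anticomplete interiors. -/
def ThetaSpec (G : SimpleGraph V) (a b : V) (n₁ n₂ n₃ : ℕ)
    (f₁ : Fin (n₁+1) → V) (f₂ : Fin (n₂+1) → V) (f₃ : Fin (n₃+1) → V) : Prop :=
  IsPathEmb G n₁ f₁ ∧ IsPathEmb G n₂ f₂ ∧ IsPathEmb G n₃ f₃ ∧
  f₁ 0 = a ∧ f₂ 0 = a ∧ f₃ 0 = a ∧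
  f₁ (Fin.last n₁) = b ∧ f₂ (Fin.last n₂) = b ∧ f₃ (Fin.last n₃) = b ∧
  1 ≤ n₁ ∧ 1 ≤ n₂ ∧ 1 ≤ n₃ ∧ a ≠ b ∧ ¬ G.Adj a b ∧
  ThetaNoCross G f₁ f₂ ∧ ThetaNoCross G f₁ f₃ ∧ ThetaNoCross G f₂ f₃

def IsThetaWithEnds (G : SimpleGraph V) (Q : Set V) (a b : V) : Prop :=
  ∃ (n₁ n₂ n₃ : ℕ) (f₁ : Fin (n₁+1) → V) (f₂ : Fin (n₂+1) → V) (f₃ : Fin (n₃+1) → V),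
    ThetaSpec G a b n₁ n₂ n₃ f₁ f₂ f₃ ∧
    Q = Set.range f₁ ∪ Set.range f₂ ∪ Set.range f₃

/-- A prism: two disjoint triangles joined by three disjoint induced paths with
no other edges between them. -/
def IsPrismOn (G : SimpleGraph V) (Q : Set V) : Prop :=
  ∃ (n₁ n₂ n₃ : ℕ) (f₁ : Fin (n₁+1) → V) (f₂ : Fin (n₂+1) → V) (f₃ : Fin (n₃+1) → V),
    IsPathEmb G n₁ f₁ ∧ IsPathEmb G n₂ f₂ ∧ IsPathEmb G n₃ f₃ ∧
    1 ≤ n₁ ∧ 1 ≤ n₂ ∧ 1 ≤ n₃ ∧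
    G.Adj (f₁ 0) (f₂ 0) ∧ G.Adj (f₂ 0) (f₃ 0) ∧ G.Adj (f₁ 0) (f₃ 0) ∧
    G.Adj (f₁ (Fin.last n₁)) (f₂ (Fin.last n₂)) ∧
    G.Adj (f₂ (Fin.last n₂)) (f₃ (Fin.last n₃)) ∧
    G.Adj (f₁ (Fin.last n₁)) (f₃ (Fin.last n₃)) ∧
    PrismNoCross G f₁ f₂ ∧ PrismNoCross G f₁ f₃ ∧ PrismNoCross G f₂ f₃ ∧
    Q = Set.range f₁ ∪ Set.range f₂ ∪ Set.range f₃

/-- A three-path configuration: a theta, a prism, or a pyramid. -/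
def IsThreePathConfig (G : SimpleGraph V) (Q : Set V) : Prop :=
  (∃ a b, IsThetaWithEnds G Q a b) ∨ IsPrismOn G Q ∨ (∃ a, IsPyramidWithApex G Q a)

/-- `D` is a connected component of the induced subgraph `G[S]`. -/
def IsComponentOf (G : SimpleGraph V) (S D : Set V) : Prop :=
  D.Nonempty ∧ D ⊆ S ∧ (G.induce D).Connected ∧
    ∀ u ∈ D, ∀ v ∈ S, v ∉ D → ¬ G.Adj u v

/-- The weight of a set of vertices. -/
noncomputable def wSum [Fintype V] (w : V → ℝ) (S : Set V) : ℝ :=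
  ∑ v, S.indicator w v

/-- A weight function: values in `[0,1]` summing to `1`. -/
def IsWeightFun [Fintype V] (w : V → ℝ) : Prop :=
  (∀ v, 0 ≤ w v ∧ w v ≤ 1) ∧ ∑ v, w v = 1

/-- `X` is a `(w,c)`-balanced separator: every component of `G \ X` has weight at most `c`. -/
def IsBalancedSep [Fintype V] (G : SimpleGraph V) (w : V → ℝ) (c : ℝ) (X : Set V) : Prop :=
  ∀ D : Set V, IsComponentOf G (Xᶜ) D → wSum w D ≤ c

/-- `X` is a `(w,G)`-shield for `X'`, phrased via the heavy components `B`, `B'`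
of the canonical separations. -/
def IsShield [Fintype V] (G : SimpleGraph V) (w : V → ℝ) (X X' : Set V) : Prop :=
  ∃ B B' : Set V,
    IsComponentOf G (Xᶜ) B ∧ 1/2 < wSum w B ∧
    IsComponentOf G (X'ᶜ) B' ∧ 1/2 < wSum w B' ∧
    ((B ∪ X ⊂ B' ∪ X') ∨ (B ∪ X = B' ∪ X' ∧ B' ⊂ B))

/-- The central bag `β(G,w,𝒳)`: the intersection of the sets `B ∪ C` over canonical
separations `(A,C,B)` of members of `𝒳`. -/
def CentralBag [Fintype V] (G : SimpleGraph V) (w : V → ℝ) (𝓧 : Set (Set V)) : Set V :=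
  {v | ∀ X ∈ 𝓧, ∀ B : Set V, IsComponentOf G (Xᶜ) B → 1/2 < wSum w B → v ∈ B ∪ X}

/-- Two separations `(A,C,B)` and `(A',C',B')` are loosely non-crossing: no path has
one end in `A ∩ C'`, the other in `A' ∩ C`, and interior in `A ∩ A'`. -/
def LooselyNonCrossing (G : SimpleGraph V) (A C A' C' : Set V) : Prop :=
  ¬ ∃ (u v : V) (p : G.Walk u v), p.IsPath ∧ u ∈ A ∩ C' ∧ v ∈ A' ∩ C ∧
    ∀ x ∈ p.support, x ≠ u → x ≠ v → x ∈ A ∩ A'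

/-- `G` has a tree decomposition of width at most `r`. -/
def HasTreeDecompOfWidthLE (G : SimpleGraph V) (r : ℝ) : Prop :=
  ∃ (ι : Type) (T : SimpleGraph ι) (τ : ι → Set V),
    T.IsTree ∧
    (∀ v : V, ∃ t, v ∈ τ t) ∧
    (∀ u v : V, G.Adj u v → ∃ t, u ∈ τ t ∧ v ∈ τ t) ∧
    (∀ v : V, (T.induce {t | v ∈ τ t}).Connected) ∧
    (∀ t, ((τ t).ncard : ℝ) - 1 ≤ r)
namespace StarCutsetAux
open Walk

variable {G : SimpleGraph V}

def wtake {u v : V} : (p : G.Walk u v) → (n : ℕ) → G.Walk u (p.getVert n)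
  | p, 0 => Walk.nil.copy rfl (p.getVert_zero).symm
  | Walk.nil, _+1 => Walk.nil
  | Walk.cons h q, n+1 => Walk.cons h (wtake q n)

def wdrop {u v : V} : (p : G.Walk u v) → (n : ℕ) → G.Walk (p.getVert n) v
  | p, 0 => p.copy (p.getVert_zero).symm rfl
  | Walk.nil, _+1 => Walk.nil
  | Walk.cons h q, n+1 => wdrop q n

lemma length_wtake {u v : V} (p : G.Walk u v) (n : ℕ) :
    (wtake p n).length = min n p.length := by
  induction p generalizing n with
  | nil => cases n <;> simp [wtake]
  | cons h q ih =>
    cases n with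
    | zero => simp [wtake]
    | succ n => show (wtake q n).length + 1 = min (n+1) (q.length + 1); rw [ih]; omega

lemma length_wdrop {u v : V} (p : G.Walk u v) (n : ℕ) :
    (wdrop p n).length = p.length - n := by
  induction p generalizing n with
  | nil => cases n <;> simp [wdrop]
  | cons h q ih =>
    cases n with
    | zero => simp [wdrop]
    | succ n => show (wdrop q n).length = (q.length + 1) - (n+1); rw [ih]; omega

lemma support_wtake {u v : V} (p : G.Walk u v) (n : ℕ) :
    (wtake p n).support ⊆ p.support := by
  induction p generalizing n with
  | nil => cases n <;> simp [wtake]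
  | cons h q ih =>
    cases n with
    | zero => intro z hz; simp [wtake] at hz; simp [hz]
    | succ n =>
      intro z hz
      change z ∈ List.cons _ (wtake q n).support at hz
      rcases List.mem_cons.mp hz with rfl | hz
      · simp
      · rw [Walk.support_cons]; exact List.mem_cons_of_mem _ (ih n hz)

lemma support_wdrop {u v : V} (p : G.Walk u v) (n : ℕ) :
    (wdrop p n).support ⊆ p.support := by
  induction p generalizing n with
  | nil => cases n <;> simp [wdrop, Walk.getVert_of_length_le]
  | cons h q ih =>
    cases n with
    | zero => simp [wdrop]
    | succ n =>
      intro z hz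
      rw [wdrop] at hz
      rw [Walk.support_cons]
      exact List.mem_cons_of_mem _ (ih n hz)

/-- From any walk from `u` to `v` whose inner vertices lie in `S`, extract a shortest one,
which is an induced path. -/
lemma exists_induced_path {u v : V} (S : Set V)
    (hne : u ≠ v) (hnadj : ¬ G.Adj u v)
    (q0 : G.Walk u v) (hq0 : ∀ z ∈ q0.support, z = u ∨ z = v ∨ z ∈ S) :
    ∃ (d : ℕ) (f : Fin (d+1) → V), 2 ≤ d ∧ IsPathEmb G d f ∧ f 0 = u ∧ f (Fin.last d) = v ∧
      ∀ i : Fin (d+1), i ≠ 0 → i ≠ Fin.last d → f i ∈ S := by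
  classical
  set T : Set ℕ := {l | ∃ q : G.Walk u v, (∀ z ∈ q.support, z = u ∨ z = v ∨ z ∈ S) ∧
      q.length = l} with hT
  have hTne : T.Nonempty := ⟨q0.length, q0, hq0, rfl⟩
  set d := sInf T with hd
  obtain ⟨q1, hq1, hq1len⟩ : d ∈ T := Nat.sInf_mem hTne
  have hmin : ∀ (q : G.Walk u v), (∀ z ∈ q.support, z = u ∨ z = v ∨ z ∈ S) → d ≤ q.length :=
    fun q hq => Nat.sInf_le ⟨q, hq, rfl⟩
  set p := q1.bypass with hp
  have hpsupp : ∀ z ∈ p.support, z = u ∨ z = v ∨ z ∈ S :=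
    fun z hz => hq1 z (q1.support_bypass_subset hz)
  have hplen : p.length = d :=
    le_antisymm (q1.length_bypass_le.trans hq1len.le) (hmin p hpsupp)
  -- injectivity on indices
  have key : ∀ i j : ℕ, i < j → j ≤ d → p.getVert i ≠ p.getVert j := by
    intro i j hij hj heq
    have hw := hmin ((wtake p i).append ((wdrop p j).copy heq.symm rfl))
      (by
        intro z hz
        rcases (Walk.mem_support_append_iff _ _).mp hz with h | h
        · exact hpsupp z (support_wtake _ _ h)
        · exact hpsupp z (support_wdrop _ _ (by simpa using h)))
    rw [Walk.length_append, Walk.length_copy, length_wtake, length_wdrop, hplen] at hw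
    omega
  have inj : ∀ i j : ℕ, i ≤ d → j ≤ d → p.getVert i = p.getVert j → i = j := by
    intro i j hi hj heq
    rcases lt_trichotomy i j with h | h | h
    · exact absurd heq (key i j h hj)
    · exact h
    · exact absurd heq.symm (key j i h hi)
  have chord : ∀ i j : ℕ, i < j → j ≤ d → G.Adj (p.getVert i) (p.getVert j) → j = i + 1 := by
    intro i j hij hj hadj
    by_contra hne2
    have hw := hmin ((wtake p i).append (Walk.cons hadj (wdrop p j)))
      (by
        intro z hz
        rcases (Walk.mem_support_append_iff _ _).mp hz with h | h
        · exact hpsupp z (support_wtake _ _ h)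
        · rw [Walk.support_cons] at h
          rcases List.mem_cons.mp h with rfl | h
          · exact hpsupp _ (Walk.mem_support_iff_exists_getVert.mpr ⟨i, rfl, by omega⟩)
          · exact hpsupp z (support_wdrop _ _ h))
    rw [Walk.length_append, Walk.length_cons, length_wtake, length_wdrop, hplen] at hw
    omega
  have hd2 : 2 ≤ d := by
    rcases Nat.lt_or_ge d 2 with h | h
    · interval_cases d
      · refine absurd (p.getVert_zero.symm.trans ?_) hne
        have := p.getVert_length; rwa [hplen] at this
      · exfalso
        have := p.adj_getVert_succ (i := 0) (by omega)
        rw [p.getVert_zero] at this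
        have h1 : p.getVert 1 = v := by
          have := p.getVert_length; rwa [hplen] at this
        rw [h1] at this
        exact hnadj this
    · exact h
  refine ⟨d, fun i => p.getVert i, hd2, ⟨?_, ?_⟩, ?_, ?_, ?_⟩
  · intro i j hij
    exact Fin.ext (inj i j (by omega) (by omega) hij)
  · intro i j
    constructor
    · intro hadj
      rcases lt_trichotomy (i : ℕ) (j : ℕ) with h | h | h
      · exact Or.inl (by have := chord i j h (by omega) hadj; omega)
      · exact absurd hadj (by have hij : i = j := Fin.ext h; rw [hij]; exact G.loopless.irrefl _)
      · exact Or.inr (by have := chord j i h (by omega) hadj.symm; omega)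
    · rintro (h | h)
      · have := p.adj_getVert_succ (i := i) (by omega)
        rwa [h] at this
      · have := p.adj_getVert_succ (i := (j : ℕ)) (by omega)
        rw [h] at this
        exact this.symm
  · exact p.getVert_zero
  · show p.getVert (d : ℕ) = v
    have := p.getVert_length; rwa [hplen] at this
  · intro i hi0 hil
    have hmem : p.getVert i ∈ p.support :=
      Walk.mem_support_iff_exists_getVert.mpr ⟨i, rfl, by omega⟩
    rcases hpsupp _ hmem with h | h | h
    · exfalso
      have : (i : ℕ) = 0 := inj i 0 (by omega) (by omega) (by rw [h, p.getVert_zero])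
      exact hi0 (Fin.ext this)
    · exfalso
      have hv : p.getVert d = v := by have := p.getVert_length; rwa [hplen] at this
      have : (i : ℕ) = d := inj i d (by omega) le_rfl (by rw [h, hv])
      exact hil (Fin.ext this)
    · exact h


/-- Glue two paths into a cycle indexed by `ZMod (d1+d2)`. -/
def glue (d1 d2 : ℕ) (f1 : Fin (d1+1) → V) (f2 : Fin (d2+1) → V) (i : ZMod (d1+d2)) : V :=
  if h : i.val ≤ d1 then f1 ⟨i.val, by omega⟩
  else f2 ⟨d1 + d2 - i.val, by omega⟩

lemma glue_of_le {d1 d2 : ℕ} (f1 : Fin (d1+1) → V) (f2 : Fin (d2+1) → V)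
    {i : ZMod (d1+d2)} (h : i.val ≤ d1) :
    glue d1 d2 f1 f2 i = f1 ⟨i.val, by omega⟩ := dif_pos h

lemma glue_of_gt {d1 d2 : ℕ} (f1 : Fin (d1+1) → V) (f2 : Fin (d2+1) → V)
    {i : ZMod (d1+d2)} (h : d1 < i.val) :
    glue d1 d2 f1 f2 i = f2 ⟨d1 + d2 - i.val, by omega⟩ := dif_neg (not_le.mpr h)

lemma clock_of_two_paths {u v x : V} {A B : Set V}
    (hAB : ∀ a ∈ A, ∀ b ∈ B, a ≠ b ∧ ¬ G.Adj a b)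
    (huv : u ≠ v) (hnadj : ¬ G.Adj u v)
    (hxu : G.Adj x u) (hxv : G.Adj x v)
    (hxA : x ∉ A) (hxB : x ∉ B) (hxu' : x ≠ u) (hxv' : x ≠ v)
    (huB : u ∉ B) (hvB : v ∉ B)
    {d1 d2 : ℕ} (h1 : 2 ≤ d1) (h2 : 2 ≤ d2)
    {f1 : Fin (d1+1) → V} {f2 : Fin (d2+1) → V}
    (hp1 : IsPathEmb G d1 f1) (hp2 : IsPathEmb G d2 f2)
    (hf10 : f1 0 = u) (hf1l : f1 (Fin.last d1) = v)
    (hf20 : f2 0 = u) (hf2l : f2 (Fin.last d2) = v)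
    (hint1 : ∀ i : Fin (d1+1), i ≠ 0 → i ≠ Fin.last d1 → f1 i ∈ A)
    (hint2 : ∀ i : Fin (d2+1), i ≠ 0 → i ≠ Fin.last d2 → f2 i ∈ B) :
    ContainsClock G := by
  obtain ⟨inj1, adj1⟩ := hp1
  obtain ⟨inj2, adj2⟩ := hp2
  haveI : NeZero (d1 + d2) := ⟨by omega⟩
  have hval : ∀ i : ZMod (d1 + d2), i.val < d1 + d2 := fun i => ZMod.val_lt i
  have hsucc : ∀ i : ZMod (d1 + d2), (i + 1).val = (i.val + 1) % (d1 + d2) := by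
    intro i
    rw [ZMod.val_add, ZMod.val_one'' (by omega)]
  have heq1 : ∀ i j : ZMod (d1 + d2), i = j + 1 ↔ i.val = (j.val + 1) % (d1 + d2) := by
    intro i j
    constructor
    · rintro rfl; exact hsucc j
    · intro h; exact ZMod.val_injective _ (by rw [h, hsucc])
  have mem1 : ∀ a : Fin (d1+1), f1 a = u ∨ f1 a = v ∨ f1 a ∈ A := by
    intro a
    by_cases h0 : a = 0
    · exact Or.inl (h0 ▸ hf10)
    by_cases hl : a = Fin.last d1
    · exact Or.inr (Or.inl (hl ▸ hf1l))
    · exact Or.inr (Or.inr (hint1 a h0 hl))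
  have cross_ne : ∀ (a : Fin (d1+1)) (b : Fin (d2+1)), b ≠ 0 → b ≠ Fin.last d2 →
      f1 a ≠ f2 b := by
    intro a b hb0 hbl heq
    have hB := hint2 b hb0 hbl
    rcases mem1 a with h | h | h
    · exact huB (h ▸ heq.symm ▸ hB)
    · exact hvB (h ▸ heq.symm ▸ hB)
    · exact (hAB _ h _ hB).1 heq
  set f := glue d1 d2 f1 f2 with hfdef
  have hfle : ∀ (i : ZMod (d1 + d2)) (h : i.val ≤ d1), f i = f1 ⟨i.val, by omega⟩ :=
    fun i h => glue_of_le f1 f2 h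
  have hfgt : ∀ (i : ZMod (d1 + d2)) (h : d1 < i.val), f i = f2 ⟨d1 + d2 - i.val, by omega⟩ :=
    fun i h => glue_of_gt f1 f2 h
  -- injectivity
  have finj : Function.Injective f := by
    intro i j heq
    by_cases hi : i.val ≤ d1 <;> by_cases hj : j.val ≤ d1
    · rw [hfle i hi, hfle j hj] at heq
      have := inj1 heq
      exact ZMod.val_injective _ (by simpa [Fin.ext_iff] using this)
    · exfalso
      have hj' := hval j
      rw [hfle i hi, hfgt j (by omega)] at heq
      exact cross_ne _ _ (Fin.ne_of_val_ne (by simp; omega)) (Fin.ne_of_val_ne (by simp; omega)) heq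
    · exfalso
      have hi' := hval i
      rw [hfgt i (by omega), hfle j hj] at heq
      exact cross_ne _ _ (Fin.ne_of_val_ne (by simp; omega)) (Fin.ne_of_val_ne (by simp; omega)) heq.symm
    · rw [hfgt i (by omega), hfgt j (by omega)] at heq
      have h' := inj2 heq
      simp only [Fin.mk.injEq] at h'
      have hi' := hval i; have hj' := hval j
      exact ZMod.val_injective _ (by omega)
  -- cross adjacency case
  have key : ∀ i j : ZMod (d1 + d2), i.val ≤ d1 → d1 < j.val → G.Adj (f i) (f j) →
      (i = j + 1 ∨ j = i + 1) := by
    intro i j hi hj hadj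
    rw [hfle i hi, hfgt j hj] at hadj
    have hjv := hval j
    rcases Nat.eq_zero_or_pos i.val with hi0 | hipos
    · have hu : f1 ⟨i.val, by omega⟩ = f2 0 := by
        rw [show (⟨i.val, by omega⟩ : Fin (d1+1)) = 0 from by simp [Fin.ext_iff, hi0], hf10,
          ← hf20]
      rw [hu] at hadj
      rcases (adj2 _ _).mp hadj with h | h
      · left
        rw [heq1]
        simp only [Fin.val_zero, Fin.val_mk] at h
        have hjn : j.val + 1 = d1 + d2 := by omega
        rw [hjn, Nat.mod_self]
        omega
      · exfalso
        simp only [Fin.val_zero, Fin.val_mk] at h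
        omega
    · rcases Nat.lt_or_ge i.val d1 with hid | hid
      · exfalso
        have hA : f1 ⟨i.val, by omega⟩ ∈ A :=
          hint1 _ (Fin.ne_of_val_ne (by simp only [Fin.val_mk, Fin.val_zero]; omega))
            (Fin.ne_of_val_ne (by simp only [Fin.val_mk, Fin.val_last]; omega))
        have hB : f2 ⟨d1 + d2 - j.val, by omega⟩ ∈ B :=
          hint2 _ (Fin.ne_of_val_ne (by simp; omega)) (Fin.ne_of_val_ne (by simp; omega))
        exact (hAB _ hA _ hB).2 hadj
      · have hiv : i.val = d1 := by omega
        have hv' : f1 ⟨i.val, by omega⟩ = f2 (Fin.last d2) := by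
          rw [show (⟨i.val, by omega⟩ : Fin (d1+1)) = Fin.last d1 from by
            simp [Fin.ext_iff, hiv], hf1l, ← hf2l]
        rw [hv'] at hadj
        rcases (adj2 _ _).mp hadj with h | h
        · exfalso
          simp only [Fin.val_last, Fin.val_mk] at h; omega
        · right
          rw [heq1]
          simp only [Fin.val_last, Fin.val_mk] at h
          rw [Nat.mod_eq_of_lt (by omega)]
          omega
  -- forward direction
  have fwd : ∀ i j : ZMod (d1 + d2), G.Adj (f i) (f j) → (i = j + 1 ∨ j = i + 1) := by
    intro i j hadj
    have hi' := hval i; have hj' := hval j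
    by_cases hi : i.val ≤ d1 <;> by_cases hj : j.val ≤ d1
    · rw [hfle i hi, hfle j hj] at hadj
      rcases (adj1 _ _).mp hadj with h | h
      · simp only [Fin.val_mk] at h
        right
        rw [heq1, Nat.mod_eq_of_lt (by omega)]
        omega
      · simp only [Fin.val_mk] at h
        left
        rw [heq1, Nat.mod_eq_of_lt (by omega)]
        omega
    · exact key i j hi (by omega) hadj
    · rcases key j i hj (by omega) hadj.symm with h | h
      · exact Or.inr h
      · exact Or.inl h
    · rw [hfgt i (by omega), hfgt j (by omega)] at hadj
      rcases (adj2 _ _).mp hadj with h | h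
      · simp only [Fin.val_mk] at h
        left
        rw [heq1, Nat.mod_eq_of_lt (by omega)]
        omega
      · simp only [Fin.val_mk] at h
        right
        rw [heq1, Nat.mod_eq_of_lt (by omega)]
        omega
  -- backward: consecutive vertices are adjacent
  have bwd : ∀ j : ZMod (d1 + d2), G.Adj (f (j + 1)) (f j) := by
    intro j
    have hj' := hval j
    have hsj := hsucc j
    by_cases hlast : j.val = d1 + d2 - 1
    · -- wrap-around : f (j+1) = u, f j = f2 1
      have h0 : (j + 1).val = 0 := by
        rw [hsj]
        have : j.val + 1 = d1 + d2 := by omega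
        rw [this, Nat.mod_self]
      have hfj1 : f (j + 1) = f2 0 := by
        rw [hfle (j + 1) (by omega), show (⟨(j+1).val, by omega⟩ : Fin (d1+1)) = 0 from by
          simp [Fin.ext_iff, h0], hf10, ← hf20]
      have hfj : f j = f2 ⟨1, by omega⟩ := by
        rw [hfgt j (by omega)]
        congr 1
        simp only [Fin.ext_iff, Fin.val_mk]
        omega
      rw [hfj1, hfj]
      refine (adj2 _ _).mpr (Or.inl ?_)
      show (0 : Fin (d2+1)).val + 1 = 1
      simp
    · have hsj' : (j + 1).val = j.val + 1 := by
        rw [hsj, Nat.mod_eq_of_lt (by omega)]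
      by_cases hc1 : j.val + 1 ≤ d1
      · rw [hfle (j+1) (by rw [hsj']; omega), hfle j (by omega)]
        exact (adj1 _ _).mpr (Or.inr (by rw [Fin.val_mk, Fin.val_mk, hsj']))
      · by_cases hc2 : j.val = d1
        · -- f j = v = f2 last, f (j+1) = f2 (d2 - 1)
          have hfj : f j = f2 (Fin.last d2) := by
            rw [hfle j (by omega), show (⟨j.val, by omega⟩ : Fin (d1+1)) = Fin.last d1 from by
              simp [Fin.ext_iff, hc2], hf1l, ← hf2l]
          have hfj1 : f (j + 1) = f2 ⟨d2 - 1, by omega⟩ := by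
            rw [hfgt (j+1) (by omega)]
            congr 1
            simp only [Fin.ext_iff, Fin.val_mk, hsj']
            omega
          rw [hfj, hfj1]
          exact (adj2 _ _).mpr (Or.inl (by rw [Fin.val_mk, Fin.val_last]; omega))
        · -- both in second branch
          rw [hfgt (j+1) (by omega), hfgt j (by omega)]
          exact (adj2 _ _).mpr (Or.inl (by rw [Fin.val_mk, Fin.val_mk, hsj']; omega))
  have hhole : IsHoleEmb G (d1 + d2) f := by
    refine ⟨by omega, finj, fun i j => ⟨fwd i j, ?_⟩⟩
    rintro (rfl | rfl)
    · exact bwd j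
    · exact (bwd i).symm
  have hxoff : ∀ i, x ≠ f i := by
    intro i heq
    by_cases hi : i.val ≤ d1
    · rw [hfle i hi] at heq
      rcases mem1 _ with h | h | h
      · exact hxu' (heq.trans h)
      · exact hxv' (heq.trans h)
      · exact hxA (heq ▸ h)
    · have hi' := hval i
      rw [hfgt i (by omega)] at heq
      have hB : f2 ⟨d1 + d2 - i.val, by omega⟩ ∈ B :=
        hint2 _ (Fin.ne_of_val_ne (by simp; omega)) (Fin.ne_of_val_ne (by simp; omega))
      exact hxB (heq ▸ hB)
  refine ⟨d1 + d2, f, x, hhole, hxoff, 0, (d1 : ZMod (d1 + d2)), ?_, ?_, ?_, ?_⟩ <;>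
    [skip; skip; skip; skip]
  · have h0 : f 0 = u := by
      rw [hfle 0 (by rw [ZMod.val_zero]; omega)]
      rw [show (⟨(0 : ZMod (d1+d2)).val, by rw [ZMod.val_zero]; omega⟩ : Fin (d1+1)) = 0 from by
        simp [Fin.ext_iff], hf10]
    rw [h0]; exact hxu
  · have hd1v : ((d1 : ZMod (d1 + d2))).val = d1 := ZMod.val_cast_of_lt (by omega)
    have hd : f (d1 : ZMod (d1 + d2)) = v := by
      rw [hfle _ (le_of_eq hd1v), show (⟨((d1 : ZMod (d1+d2))).val, by rw [ZMod.val_cast_of_lt (by omega : d1 < d1 + d2)]; omega⟩ : Fin (d1+1)) =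
        Fin.last d1 from by simp [Fin.ext_iff, hd1v], hf1l]
    rw [hd]; exact hxv
  · have h0 : f 0 = u := by
      rw [hfle 0 (by rw [ZMod.val_zero]; omega)]
      rw [show (⟨(0 : ZMod (d1+d2)).val, by rw [ZMod.val_zero]; omega⟩ : Fin (d1+1)) = 0 from by
        simp [Fin.ext_iff], hf10]
    have hd1v : ((d1 : ZMod (d1 + d2))).val = d1 := ZMod.val_cast_of_lt (by omega)
    have hd : f (d1 : ZMod (d1 + d2)) = v := by
      rw [hfle _ (le_of_eq hd1v), show (⟨((d1 : ZMod (d1+d2))).val, by rw [ZMod.val_cast_of_lt (by omega : d1 < d1 + d2)]; omega⟩ : Fin (d1+1)) =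
        Fin.last d1 from by simp [Fin.ext_iff, hd1v], hf1l]
    rw [h0, hd]; exact huv
  · have h0 : f 0 = u := by
      rw [hfle 0 (by rw [ZMod.val_zero]; omega)]
      rw [show (⟨(0 : ZMod (d1+d2)).val, by rw [ZMod.val_zero]; omega⟩ : Fin (d1+1)) = 0 from by
        simp [Fin.ext_iff], hf10]
    have hd1v : ((d1 : ZMod (d1 + d2))).val = d1 := ZMod.val_cast_of_lt (by omega)
    have hd : f (d1 : ZMod (d1 + d2)) = v := by
      rw [hfle _ (le_of_eq hd1v), show (⟨((d1 : ZMod (d1+d2))).val, by rw [ZMod.val_cast_of_lt (by omega : d1 < d1 + d2)]; omega⟩ : Fin (d1+1)) =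
        Fin.last d1 from by simp [Fin.ext_iff, hd1v], hf1l]
    rw [h0, hd]; exact hnadj

end StarCutsetAux

namespace StarCutsetAux
open Walk

variable {V : Type*} {G : SimpleGraph V}

lemma reachable_induce {s : Set V} : ∀ {c d : V} (p : G.Walk c d),
    (∀ z ∈ p.support, z ∈ s) → ∀ (hc : c ∈ s) (hd : d ∈ s),
    (G.induce s).Reachable ⟨c, hc⟩ ⟨d, hd⟩ := by
  intro c d p
  induction p with
  | nil => intro _ hc hd; exact Reachable.refl _
  | @cons c z d h q ih =>
    intro hs hc hd
    have hz : z ∈ s := hs z (by simp)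
    have hadj : (G.induce s).Adj ⟨c, hc⟩ ⟨z, hz⟩ := h
    exact hadj.reachable.trans (ih (fun w hw => hs w (by simp [hw])) hz hd)

lemma exists_adj_of_walk {Y : Set V} {u : V} (hu : u ∈ Y) (R : Set V)
    (hR : ∀ w ∈ R, w ∉ Y) (hRc : ∀ w ∈ R, ∀ z, G.Adj w z → z ∉ Y → z ∈ R) :
    ∀ {c : V} (q : G.Walk c u), c ∈ R → (∀ z ∈ q.support, z ∈ Y → z = u) →
      ∃ w ∈ R, G.Adj w u := by
  intro c q
  induction q with
  | nil => intro hc _; exact absurd hu (hR _ hc)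
  | @cons c z u h q ih =>
    intro hc hq
    by_cases hz : z ∈ Y
    · have : z = u := hq z (by simp) hz
      exact ⟨c, hc, this ▸ h⟩
    · exact ih hu (hRc c hc z h hz) (fun w hw hwY => hq w (by simp [hw]) hwY)

lemma chain_min {c : Set (Set V)} (hchain : IsChain (· ⊆ ·) c) (hcne : c.Nonempty) :
    ∀ (T : Finset V), (∀ z ∈ T, ∃ Y ∈ c, z ∉ Y) → ∃ Y0 ∈ c, ∀ z ∈ T, z ∉ Y0 := by
  classical
  intro T
  induction T using Finset.induction_on with
  | empty => intro _; obtain ⟨Y0, hY0⟩ := hcne; exact ⟨Y0, hY0, by simp⟩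
  | @insert z T hzT ih =>
    intro hT
    obtain ⟨Y0, hY0c, hY0⟩ := ih (fun w hw => hT w (Finset.mem_insert_of_mem hw))
    obtain ⟨Y1, hY1c, hY1⟩ := hT z (Finset.mem_insert_self _ _)
    rcases eq_or_ne Y0 Y1 with rfl | hne
    · refine ⟨Y0, hY0c, fun w hw => ?_⟩
      rcases Finset.mem_insert.mp hw with rfl | hw
      · exact hY1
      · exact hY0 w hw
    · rcases hchain hY0c hY1c hne with h01 | h10
      · refine ⟨Y0, hY0c, fun w hw => ?_⟩
        rcases Finset.mem_insert.mp hw with rfl | hw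
        · exact fun hm => hY1 (h01 hm)
        · exact hY0 w hw
      · refine ⟨Y1, hY1c, fun w hw => ?_⟩
        rcases Finset.mem_insert.mp hw with rfl | hw
        · exact hY1
        · exact fun hm => hY0 w hw (h10 hm)

end StarCutsetAux

/-- If a clock-free graph admits a star cutset, then it admits a clique cutset. -/
theorem clockFree_star_cutset_to_clique_cutset (G : SimpleGraph V)
    (hG : ClockFree G) (h : HasStarCutset G) : HasCliqueCutset G := by
  classical
  open StarCutsetAux in
  obtain ⟨X, ⟨hXc_ne, hXdisc⟩, x, hxX, hstar⟩ := h
  haveI hVne : Nonempty (↥(Xᶜ)) := hXc_ne.to_subtype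
  have hnp : ¬ (G.induce (Xᶜ : Set V)).Preconnected := by
    intro hp
    exact hXdisc ((SimpleGraph.connected_iff _).mpr ⟨hp, hVne⟩)
  rw [SimpleGraph.Preconnected] at hnp
  push_neg at hnp
  obtain ⟨a0, b0, hab⟩ := hnp
  obtain ⟨a, haX⟩ := a0
  obtain ⟨b, hbX⟩ := b0
  -- the family of separating subsets of X containing x
  set S : Set (Set V) := {Y | x ∈ Y ∧ Y ⊆ X ∧ ∀ p : G.Walk a b, ∃ z ∈ Y, z ∈ p.support}
    with hS
  have hXS : X ∈ S := by
    refine ⟨hxX, le_refl _, fun p => ?_⟩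
    by_contra hno
    push_neg at hno
    have hsub : ∀ z ∈ p.support, z ∈ (Xᶜ : Set V) := fun z hz hzX => hno z hzX hz
    exact hab (reachable_induce p hsub haX hbX)
  have hZorn : ∃ m, m ⊆ X ∧ Minimal (· ∈ S) m := by
    refine zorn_superset_nonempty S ?_ X hXS
    intro c hcS hchain hcne
    refine ⟨⋂₀ c, ⟨?_, ?_, ?_⟩, fun s hs => Set.sInter_subset_of_mem hs⟩
    · exact Set.mem_sInter.mpr fun Y hY => (hcS hY).1
    · obtain ⟨Y0, hY0⟩ := hcne
      exact fun z hz => (hcS hY0).2.1 (Set.mem_sInter.mp hz Y0 hY0)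
    · intro p
      by_contra hno
      push_neg at hno
      obtain ⟨Y0, hY0c, hY0⟩ := chain_min hchain hcne p.support.toFinset
        (by
          intro z hz
          by_contra hall
          push_neg at hall
          exact hno z (Set.mem_sInter.mpr hall) (List.mem_toFinset.mp hz))
      obtain ⟨z, hzY, hzsupp⟩ := (hcS hY0c).2.2 p
      exact hY0 z (List.mem_toFinset.mpr hzsupp) hzY
  obtain ⟨Y, hYX, hYmin⟩ := hZorn
  obtain ⟨hxY, hYsubX, hsepY⟩ := hYmin.prop
  have haY : a ∉ Y := fun hz => haX (hYsubX hz)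
  have hbY : b ∉ Y := fun hz => hbX (hYsubX hz)
  -- reachability avoiding Y
  set Reach : V → Set V := fun s => {t | ∃ p : G.Walk s t, ∀ z ∈ p.support, z ∉ Y}
    with hReach
  have hRnotY : ∀ s, ∀ t ∈ Reach s, t ∉ Y := fun s t ht => by
    obtain ⟨p, hp⟩ := ht
    exact hp t p.end_mem_support
  have hRself : ∀ s, s ∉ Y → s ∈ Reach s := fun s hs =>
    ⟨Walk.nil, by simpa using hs⟩
  have hRclosed : ∀ s, ∀ w ∈ Reach s, ∀ z, G.Adj w z → z ∉ Y → z ∈ Reach s := by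
    intro s w hw z hadj hz
    obtain ⟨p, hp⟩ := hw
    refine ⟨p.concat hadj, ?_⟩
    intro t ht
    rw [Walk.support_concat, List.mem_append] at ht
    rcases ht with ht | ht
    · exact hp t ht
    · simpa using (List.mem_singleton.mp ht) ▸ hz
  have hRmem : ∀ s, ∀ t ∈ Reach s, ∀ (p : G.Walk s t), (∀ z ∈ p.support, z ∉ Y) →
      ∀ z ∈ p.support, z ∈ Reach s := by
    intro s t _ p hp z hz
    exact ⟨p.takeUntil z hz, fun w hw => hp w (p.support_takeUntil_subset hz hw)⟩
  -- anticomplete components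
  have hAB : ∀ a' ∈ Reach a, ∀ b' ∈ Reach b, a' ≠ b' ∧ ¬ G.Adj a' b' := by
    intro a' ha' b' hb'
    obtain ⟨pa, hpa⟩ := ha'
    obtain ⟨pb, hpb⟩ := hb'
    constructor
    · rintro rfl
      obtain ⟨z, hzY, hzsupp⟩ := hsepY (pa.append pb.reverse)
      rw [Walk.mem_support_append_iff] at hzsupp
      rcases hzsupp with hz | hz
      · exact hpa z hz hzY
      · exact hpb z (by rwa [Walk.support_reverse, List.mem_reverse] at hz) hzY
    · intro hadj
      obtain ⟨z, hzY, hzsupp⟩ := hsepY (pa.append (Walk.cons hadj pb.reverse))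
      rw [Walk.mem_support_append_iff] at hzsupp
      rcases hzsupp with hz | hz
      · exact hpa z hz hzY
      · rw [Walk.support_cons] at hz
        rcases List.mem_cons.mp hz with rfl | hz
        · exact hpa z pa.end_mem_support hzY
        · exact hpb z (by rwa [Walk.support_reverse, List.mem_reverse] at hz) hzY
  -- every non-center vertex of Y has neighbours in both components
  have hnbr : ∀ u ∈ Y, u ≠ x →
      (∃ w ∈ Reach a, G.Adj w u) ∧ (∃ w ∈ Reach b, G.Adj w u) := by
    intro u huY hux
    have hYu : Y \ {u} ∉ S := by
      intro hmem
      have h1 : Y ⊆ Y \ {u} := hYmin.2 hmem Set.diff_subset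
      exact (h1 huY).2 rfl
    have hfail : ¬ ∀ p : G.Walk a b, ∃ z ∈ Y \ {u}, z ∈ p.support := by
      intro hsep'
      exact hYu ⟨⟨hxY, fun h => (hux h.symm).elim⟩, Set.diff_subset.trans hYsubX, hsep'⟩
    push_neg at hfail
    obtain ⟨p, hp⟩ := hfail
    obtain ⟨z, hzY, hzsupp⟩ := hsepY p
    have hzu : z = u := by
      by_contra hzu
      exact hp z ⟨hzY, hzu⟩ hzsupp
    subst hzu
    have husupp : z ∈ p.support := hzsupp
    have havoid : ∀ w ∈ p.support, w ∈ Y → w = z := by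
      intro w hw hwY
      by_contra hwz
      exact hp w ⟨hwY, hwz⟩ hw
    constructor
    · exact exists_adj_of_walk hzY (Reach a) (hRnotY a) (hRclosed a)
        (p.takeUntil z husupp) (hRself a haY)
        (fun w hw => havoid w (p.support_takeUntil_subset husupp hw))
    · exact exists_adj_of_walk hzY (Reach b) (hRnotY b) (hRclosed b)
        ((p.dropUntil z husupp).reverse) (hRself b hbY)
        (fun w hw => havoid w
          (p.support_dropUntil_subset husupp
            (by rwa [Walk.support_reverse, List.mem_reverse] at hw)))
  -- the candidate clique cutset
  refine ⟨Y, ⟨⟨a, haY⟩, ?_⟩, ?_⟩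
  · -- Y is a cutset
    intro hcon
    have hreach := hcon.preconnected ⟨a, haY⟩ ⟨b, hbY⟩
    obtain ⟨p⟩ := hreach
    let ι : G.induce (Yᶜ : Set V) →g G := ⟨Subtype.val, fun {c d} hcd => hcd⟩
    obtain ⟨z, hzY, hzsupp⟩ := hsepY (p.map ι)
    rw [Walk.support_map, List.mem_map] at hzsupp
    obtain ⟨⟨w, hw⟩, _, rfl⟩ := hzsupp
    exact hw hzY
  · -- Y is a clique
    by_contra hnc
    rw [SimpleGraph.isClique_iff] at hnc
    unfold Set.Pairwise at hnc
    push_neg at hnc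
    obtain ⟨u, huY, v, hvY, huv, hnadj⟩ := hnc
    have hux : u ≠ x := by
      rintro rfl
      rcases hstar v (hYsubX hvY) with h | h
      · exact huv h.symm
      · exact hnadj h
    have hvx : v ≠ x := by
      rintro rfl
      rcases hstar u (hYsubX huY) with h | h
      · exact huv h
      · exact hnadj h.symm
    have hxu : G.Adj x u := by
      rcases hstar u (hYsubX huY) with h | h
      · exact absurd h hux
      · exact h
    have hxv : G.Adj x v := by
      rcases hstar v (hYsubX hvY) with h | h
      · exact absurd h hvx
      · exact h
    obtain ⟨⟨a1, ha1R, ha1u⟩, ⟨b1, hb1R, hb1u⟩⟩ := hnbr u huY hux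
    obtain ⟨⟨a2, ha2R, ha2v⟩, ⟨b2, hb2R, hb2v⟩⟩ := hnbr v hvY hvx
    -- build a u-v walk through Reach a
    have hwalkA : ∃ q : G.Walk u v, ∀ z ∈ q.support, z = u ∨ z = v ∨ z ∈ Reach a := by
      obtain ⟨p1, hp1⟩ := ha1R
      obtain ⟨p2, hp2⟩ := ha2R
      refine ⟨Walk.cons ha1u.symm ((p1.reverse.append p2).concat ha2v), ?_⟩
      intro z hz
      rw [Walk.support_cons] at hz
      rcases List.mem_cons.mp hz with rfl | hz
      · exact Or.inl rfl
      rw [Walk.support_concat, List.mem_append] at hz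
      rcases hz with hz | hz
      · rw [Walk.mem_support_append_iff] at hz
        rcases hz with hz | hz
        · rw [Walk.support_reverse, List.mem_reverse] at hz
          exact Or.inr (Or.inr (hRmem a a1 ⟨p1, hp1⟩ p1 hp1 z hz))
        · exact Or.inr (Or.inr (hRmem a a2 ⟨p2, hp2⟩ p2 hp2 z hz))
      · exact Or.inr (Or.inl (List.mem_singleton.mp hz))
    have hwalkB : ∃ q : G.Walk u v, ∀ z ∈ q.support, z = u ∨ z = v ∨ z ∈ Reach b := by
      obtain ⟨p1, hp1⟩ := hb1R
      obtain ⟨p2, hp2⟩ := hb2R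
      refine ⟨Walk.cons hb1u.symm ((p1.reverse.append p2).concat hb2v), ?_⟩
      intro z hz
      rw [Walk.support_cons] at hz
      rcases List.mem_cons.mp hz with rfl | hz
      · exact Or.inl rfl
      rw [Walk.support_concat, List.mem_append] at hz
      rcases hz with hz | hz
      · rw [Walk.mem_support_append_iff] at hz
        rcases hz with hz | hz
        · rw [Walk.support_reverse, List.mem_reverse] at hz
          exact Or.inr (Or.inr (hRmem b b1 ⟨p1, hp1⟩ p1 hp1 z hz))
        · exact Or.inr (Or.inr (hRmem b b2 ⟨p2, hp2⟩ p2 hp2 z hz))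
      · exact Or.inr (Or.inl (List.mem_singleton.mp hz))
    obtain ⟨qA, hqA⟩ := hwalkA
    obtain ⟨qB, hqB⟩ := hwalkB
    obtain ⟨d1, f1, hd1, hpe1, hf10, hf1l, hint1⟩ :=
      exists_induced_path (G := G) (Reach a) huv hnadj qA hqA
    obtain ⟨d2, f2, hd2, hpe2, hf20, hf2l, hint2⟩ :=
      exists_induced_path (G := G) (Reach b) huv hnadj qB hqB
    exact hG (clock_of_two_paths hAB huv hnadj hxu hxv
      (fun hx => hRnotY a x hx hxY)
      (fun hx => hRnotY b x hx hxY) hux.symm hvx.symm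
      (fun hu => hRnotY b u hu huY) (fun hv => hRnotY b v hv hvY)
      hd1 hd2 hpe1 hpe2 hf10 hf1l hf20 hf2l hint1 hint2)
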